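/- Let G be a connected planar graph embedded in the sphere S², let F be its set of faces, E its set of edges, and fix two distinct faces F_{n-1}, F_n (the faces adjacent to a basepoint edge). Let X be the F₂-vector space with basis the faces other than F_{n-1} and F_n, let Y be the F₂-vector space with basis indexed by E (edges not containing the basepoint), and let f : X → Y send each basis face to the sum of the edges on its boundary. If the diagram is connected and F_{n-1}, F_n are adjacent (share the basepoint edge, which is excluded from Y), then f is injective. -/
import Mathlib


/-- Injectivity of the face-to-edge boundary map over `𝔽₂`.
A planar graph embedded in `S²` is encoded combinatorially by its set of faces, its set of
edges `Edges` (the basepoint edge is excluded), and a boundary map assigning to each face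
the finite set of its boundary edges.  The hypotheses say every edge lies on exactly two
faces, and the dual graph (faces adjacent when they share an edge of `Edges`) is connected.
Two distinct faces `Fa, Fb` (those adjacent to the basepoint edge) are distinguished.
Then the `𝔽₂`-linear map sending a face other than `Fa, Fb` to the sum of its boundary
edges is injective. -/
theorem face_boundary_map_injective
    (Faces Edges : Type) [Fintype Faces] [DecidableEq Faces] [Fintype Edges]
    [DecidableEq Edges]
    (boundary : Faces → Finset Edges)
    (Fa Fb : Faces) (hne : Fa ≠ Fb)
    (htwo : ∀ e : Edges, (Finset.univ.filter (fun F => e ∈ boundary F)).card = 2)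
    (hconn : ∀ F F' : Faces,
      Relation.ReflTransGen (fun A B : Faces => ∃ e : Edges, e ∈ boundary A ∧ e ∈ boundary B)
        F F') :
    Function.Injective
      (fun (c : {F : Faces // F ≠ Fa ∧ F ≠ Fb} → ZMod 2) (e : Edges) =>
        ∑ F : {F : Faces // F ≠ Fa ∧ F ≠ Fb}, if e ∈ boundary F.1 then c F else 0) := by
  intro c1 c2 h
  set g : Faces → ZMod 2 :=
    fun F => if hF : F ≠ Fa ∧ F ≠ Fb then c1 ⟨F, hF⟩ - c2 ⟨F, hF⟩ else 0 with hg
  have hsum : ∀ e : Edges,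
      ∑ F ∈ Finset.univ.filter (fun F => e ∈ boundary F), g F = 0 := by
    intro e
    have h1 : (∑ F : {F : Faces // F ≠ Fa ∧ F ≠ Fb}, if e ∈ boundary F.1 then c1 F else 0)
        = ∑ F : {F : Faces // F ≠ Fa ∧ F ≠ Fb}, if e ∈ boundary F.1 then c2 F else 0 :=
      congrFun h e
    have h2 : ∑ F : {F : Faces // F ≠ Fa ∧ F ≠ Fb},
        (if e ∈ boundary F.1 then g F.1 else 0) = 0 := by
      have : ∀ F : {F : Faces // F ≠ Fa ∧ F ≠ Fb},
          (if e ∈ boundary F.1 then g F.1 else 0)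
          = (if e ∈ boundary F.1 then c1 F else 0) - (if e ∈ boundary F.1 then c2 F else 0) := by
        intro F
        by_cases he : e ∈ boundary F.1
        · simp [he, hg, F.2]
        · simp [he]
      rw [Finset.sum_congr rfl (fun F _ => this F), Finset.sum_sub_distrib, h1, sub_self]
    have h3 : ∑ F : Faces, (if e ∈ boundary F then g F else 0) = 0 := by
      rw [← Fintype.sum_subtype_add_sum_subtype (fun F => F ≠ Fa ∧ F ≠ Fb)
        (fun F => if e ∈ boundary F then g F else 0)]
      have hz : ∑ i : {x : Faces // ¬(x ≠ Fa ∧ x ≠ Fb)},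
          (if e ∈ boundary i.1 then g i.1 else 0) = 0 := by
        refine Finset.sum_eq_zero fun i _ => ?_
        have : g i.1 = 0 := dif_neg i.2
        simp [this]
      rw [hz, add_zero, h2]
    rw [Finset.sum_filter]
    exact h3
  have adj : ∀ A B : Faces, (∃ e : Edges, e ∈ boundary A ∧ e ∈ boundary B) → g A = g B := by
    rintro A B ⟨e, hA, hB⟩
    by_cases hAB : A = B
    · rw [hAB]
    · have hsub : ({A, B} : Finset Faces) ⊆ Finset.univ.filter (fun F => e ∈ boundary F) := by
        intro x hx
        simp only [Finset.mem_insert, Finset.mem_singleton] at hx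
        rcases hx with rfl | rfl <;> simp [hA, hB]
      have hcard : (Finset.univ.filter (fun F => e ∈ boundary F)).card
          ≤ ({A, B} : Finset Faces).card := by
        rw [htwo e, Finset.card_insert_of_notMem (by simpa using hAB), Finset.card_singleton]
      have heq := Finset.eq_of_subset_of_card_le hsub hcard
      have := hsum e
      rw [← heq, Finset.sum_pair hAB] at this
      have h4 := eq_neg_of_add_eq_zero_left this
      rwa [CharTwo.neg_eq] at h4
  have hzero : ∀ F : Faces, g F = 0 := by
    intro F
    have hFa : g Fa = 0 := by simp [hg]
    have hwalk := hconn Fa F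
    induction hwalk with
    | refl => exact hFa
    | tail _ hbc ih => exact (adj _ _ hbc).symm.trans ih
  have : c1 = c2 := by
    funext F
    have := hzero F.1
    rw [hg] at this
    simp only [dif_pos F.2] at this
    exact sub_eq_zero.mp this
  exact this
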